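/- If A is a Lie(G)-valued 1-form and Λ a Lie(H)-valued 1-form on an open set U such that A = g⁻¹ dg − t(Λ) for some smooth g : U → G, and B := −dΛ − A ▷ Λ − ½[Λ,Λ], then the connective structure (A,B) is flat, i.e. dA + ½[A,A] − t(B) = 0 and dB + A ▷ B = 0. -/

import Mathlib

noncomputable section

abbrev E (d : ℕ) := Fin d → ℝ
abbrev Mat (n : ℕ) := (Fin n → ℝ) →L[ℝ] (Fin n → ℝ)

set_option maxHeartbeats 4000000
set_option synthInstance.maxHeartbeats 1000000

/-- Pointwise exterior derivative of a 1-form. -/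
def dOne {d n : ℕ} (A : E d → E d → Mat n) (x v w : E d) : Mat n :=
  fderiv ℝ (fun y => A y w) x v - fderiv ℝ (fun y => A y v) x w

/-- Pointwise exterior derivative of a 2-form. -/
def dTwo {d n : ℕ} (B : E d → E d → E d → Mat n) (x u v w : E d) : Mat n :=
  fderiv ℝ (fun y => B y v w) x u - fderiv ℝ (fun y => B y u w) x v
    + fderiv ℝ (fun y => B y u v) x w

set_option maxHeartbeats 4000000 in
set_option synthInstance.maxHeartbeats 1000000 in
instance matRing (n : ℕ) : Ring (Mat n) := inferInstance
set_option synthInstance.maxHeartbeats 1000000 in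
instance matTowerR (n : ℕ) : IsScalarTower ℝ (Mat n) (Mat n) := inferInstance
set_option synthInstance.maxHeartbeats 1000000 in
instance matTowerZ (n : ℕ) : IsScalarTower ℤ (Mat n) (Mat n) := inferInstance
set_option synthInstance.maxHeartbeats 1000000 in
instance matTowerN (n : ℕ) : IsScalarTower ℕ (Mat n) (Mat n) := inferInstance
set_option synthInstance.maxHeartbeats 1000000 in
instance matCommR (n : ℕ) : SMulCommClass ℝ (Mat n) (Mat n) := inferInstance
set_option synthInstance.maxHeartbeats 1000000 in
instance matCommZ (n : ℕ) : SMulCommClass ℤ (Mat n) (Mat n) := inferInstance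
set_option synthInstance.maxHeartbeats 1000000 in
instance matCommN (n : ℕ) : SMulCommClass ℕ (Mat n) (Mat n) := inferInstance

/-- if `A = g⁻¹ dg - t(Λ)` and `B = -dΛ - A ▷ Λ - ½[Λ,Λ]`, then the
connective structure `(A,B)` is flat: `dA + ½[A,A] - t(B) = 0` and `dB + A ▷ B = 0`
(matrix model: `▷ = ad`). -/
theorem pure_gauge_implies_flat
    {d n : ℕ} (U : Set (E d)) (hU : IsOpen U)
    (t : Mat n →ₗ[ℝ] Mat n)
    (ht_equiv : ∀ a b : Mat n, t (a * b - b * a) = a * t b - t b * a)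
    (ht_peiffer : ∀ a b : Mat n, t a * b - b * t a = a * b - b * a)
    (A Λ : E d → E d → Mat n) (B : E d → E d → E d → Mat n)
    (g g' : E d → Mat n)
    (hg_inv : ∀ x ∈ U, g x * g' x = 1 ∧ g' x * g x = 1)
    (hg_sm : ContDiffOn ℝ 2 g U) (hg'_sm : ContDiffOn ℝ 2 g' U)
    (hΛ_sm : ∀ v, ContDiffOn ℝ 2 (fun x => Λ x v) U)
    -- `A = g⁻¹ dg - t(Λ)`:
    (hA : ∀ x ∈ U, ∀ v, A x v = g' x * fderiv ℝ g x v - t (Λ x v))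
    -- `B = -dΛ - A ▷ Λ - ½[Λ,Λ]`:
    (hB : ∀ x ∈ U, ∀ v w, B x v w =
      -(fderiv ℝ (fun y => Λ y w) x v - fderiv ℝ (fun y => Λ y v) x w)
      - ((A x v * Λ x w - Λ x w * A x v) - (A x w * Λ x v - Λ x v * A x w))
      - (Λ x v * Λ x w - Λ x w * Λ x v)) :
    (∀ x ∈ U, ∀ v w,
      dOne A x v w + (A x v * A x w - A x w * A x v) - t (B x v w) = 0) ∧
    (∀ x ∈ U, ∀ u v w,
      dTwo B x u v w
        + (A x u * B x v w - B x v w * A x u)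
        - (A x v * B x u w - B x u w * A x v)
        + (A x w * B x u v - B x u v * A x w) = 0) := by

  have tcont : Continuous t := t.continuous_of_finiteDimensional
  let tC : Mat n →L[ℝ] Mat n := { toLinearMap := t, cont := tcont }
  have htC : ∀ m, tC m = t m := fun _ => rfl
  -- Main derivative formula for  and differentiability of .
  have main : ∀ x ∈ U,
      (∀ v u, fderiv ℝ (fun y => A y v) x u =
        -((g' x * fderiv ℝ g x u) * (g' x * fderiv ℝ g x v))
          + g' x * fderiv ℝ (fderiv ℝ g) x u v
          - t (fderiv ℝ (fun y => Λ y v) x u)) ∧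
      (∀ v, DifferentiableAt ℝ (fun y => A y v) x) := by
    intro x hx
    have hU' : U ∈ nhds x := hU.mem_nhds hx
    have hg2 : ContDiffAt ℝ 2 g x := hg_sm.contDiffAt hU'
    have hg'2 : ContDiffAt ℝ 2 g' x := hg'_sm.contDiffAt hU'
    have hgd : DifferentiableAt ℝ g x := hg2.differentiableAt two_ne_zero
    have hg'd : DifferentiableAt ℝ g' x := hg'2.differentiableAt two_ne_zero
    have hdgd : DifferentiableAt ℝ (fderiv ℝ g) x :=
      (hg2.fderiv_right (m := 1) (by norm_num)).differentiableAt one_ne_zero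
    have hinv1 : g x * g' x = 1 := (hg_inv x hx).1
    have honeev : (fun y => g' y * g y) =ᶠ[nhds x] (fun _ => (1 : Mat n)) := by
      filter_upwards [hU'] with y hy
      exact (hg_inv y hy).2
    have hmulgg : HasFDerivAt (fun y => g' y * g y)
        (g' x • fderiv ℝ g x + (fderiv ℝ g' x).smulRight (g x)) x :=
      hg'd.hasFDerivAt.mul' hgd.hasFDerivAt
    have hzero : (g' x • fderiv ℝ g x + (fderiv ℝ g' x).smulRight (g x))
        = (0 : E d →L[ℝ] Mat n) := by
      rw [← hmulgg.fderiv, honeev.fderiv_eq]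
      exact fderiv_const_apply _
    have hg'for : ∀ u, fderiv ℝ g' x u = -(g' x * fderiv ℝ g x u * g' x) := by
      intro u
      have h1 : g' x * fderiv ℝ g x u + fderiv ℝ g' x u * g x = 0 := by
        have h := congrArg (fun (L : E d →L[ℝ] Mat n) => L u) hzero
        simpa [smul_eq_mul] using h
      have h2 : fderiv ℝ g' x u * g x = -(g' x * fderiv ℝ g x u) :=
        eq_neg_of_add_eq_zero_right h1
      calc fderiv ℝ g' x u = fderiv ℝ g' x u * (g x * g' x) := by rw [hinv1, mul_one]
        _ = (fderiv ℝ g' x u * g x) * g' x := by rw [mul_assoc]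
        _ = -(g' x * fderiv ℝ g x u) * g' x := by rw [h2]
        _ = -(g' x * fderiv ℝ g x u * g' x) := by noncomm_ring
    have hasA : ∀ v, HasFDerivAt (fun y => A y v)
        (g' x • ((fderiv ℝ g x).comp (0 : E d →L[ℝ] E d)
            + (fderiv ℝ (fderiv ℝ g) x).flip v)
          + (fderiv ℝ g' x).smulRight (fderiv ℝ g x v)
          - tC.comp (fderiv ℝ (fun y => Λ y v) x)) x := by
      intro v
      have hΛd : DifferentiableAt ℝ (fun y => Λ y v) x :=
        ((hΛ_sm v).contDiffAt hU').differentiableAt two_ne_zero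
      have hdgv : HasFDerivAt (fun y => fderiv ℝ g y v)
          ((fderiv ℝ g x).comp (0 : E d →L[ℝ] E d)
            + (fderiv ℝ (fderiv ℝ g) x).flip v) x :=
        hdgd.hasFDerivAt.clm_apply (hasFDerivAt_const v x)
      have htp : HasFDerivAt (fun y => t (Λ y v))
          (tC.comp (fderiv ℝ (fun y => Λ y v) x)) x :=
        tC.hasFDerivAt.comp x hΛd.hasFDerivAt
      have htot := (hg'd.hasFDerivAt.mul' hdgv).sub htp
      have hAev : (fun y => A y v) =ᶠ[nhds x]
          (fun y => g' y * fderiv ℝ g y v - t (Λ y v)) := by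
        filter_upwards [hU'] with y hy; exact hA y hy v
      exact htot.congr_of_eventuallyEq hAev
    refine ⟨fun v u => ?_, fun v => (hasA v).differentiableAt⟩
    rw [(hasA v).fderiv]
    simp only [ContinuousLinearMap.sub_apply, ContinuousLinearMap.add_apply,
      ContinuousLinearMap.smul_apply, ContinuousLinearMap.smulRight_apply,
      ContinuousLinearMap.comp_apply, ContinuousLinearMap.flip_apply,
      ContinuousLinearMap.zero_apply, map_zero, smul_eq_mul, htC, hg'for u]
    noncomm_ring
  -- Derivative formula for .
  have hDB : ∀ x ∈ U, ∀ v w u, fderiv ℝ (fun y => B y v w) x u =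
      -(fderiv ℝ (fderiv ℝ (fun z => Λ z w)) x u v
          - fderiv ℝ (fderiv ℝ (fun z => Λ z v)) x u w)
      - ((fderiv ℝ (fun y => A y v) x u * Λ x w + A x v * fderiv ℝ (fun y => Λ y w) x u
          - (fderiv ℝ (fun y => Λ y w) x u * A x v + Λ x w * fderiv ℝ (fun y => A y v) x u))
        - (fderiv ℝ (fun y => A y w) x u * Λ x v + A x w * fderiv ℝ (fun y => Λ y v) x u
          - (fderiv ℝ (fun y => Λ y v) x u * A x w + Λ x v * fderiv ℝ (fun y => A y w) x u)))
      - (fderiv ℝ (fun y => Λ y v) x u * Λ x w + Λ x v * fderiv ℝ (fun y => Λ y w) x u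
          - (fderiv ℝ (fun y => Λ y w) x u * Λ x v + Λ x w * fderiv ℝ (fun y => Λ y v) x u)) := by
    intro x hx v w u
    have hU' : U ∈ nhds x := hU.mem_nhds hx
    have hAd : ∀ a, DifferentiableAt ℝ (fun y => A y a) x := (main x hx).2
    have hΛd : ∀ a, DifferentiableAt ℝ (fun y => Λ y a) x := fun a =>
      ((hΛ_sm a).contDiffAt hU').differentiableAt two_ne_zero
    have hdΛd : ∀ a, DifferentiableAt ℝ (fderiv ℝ (fun y => Λ y a)) x := fun a =>
      (((hΛ_sm a).contDiffAt hU').fderiv_right (m := 1) (by norm_num)).differentiableAt one_ne_zero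
    have q1 := (hdΛd w).hasFDerivAt.clm_apply (hasFDerivAt_const v x)
    have q2 := (hdΛd v).hasFDerivAt.clm_apply (hasFDerivAt_const w x)
    have m1 := (hAd v).hasFDerivAt.mul' (hΛd w).hasFDerivAt
    have m2 := (hΛd w).hasFDerivAt.mul' (hAd v).hasFDerivAt
    have m3 := (hAd w).hasFDerivAt.mul' (hΛd v).hasFDerivAt
    have m4 := (hΛd v).hasFDerivAt.mul' (hAd w).hasFDerivAt
    have m5 := (hΛd v).hasFDerivAt.mul' (hΛd w).hasFDerivAt
    have m6 := (hΛd w).hasFDerivAt.mul' (hΛd v).hasFDerivAt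
    have htot := (((q1.sub q2).neg).sub ((m1.sub m2).sub (m3.sub m4))).sub (m5.sub m6)
    have hBev : (fun y => B y v w) =ᶠ[nhds x] (fun y =>
        -(fderiv ℝ (fun z => Λ z w) y v - fderiv ℝ (fun z => Λ z v) y w)
        - ((A y v * Λ y w - Λ y w * A y v) - (A y w * Λ y v - Λ y v * A y w))
        - (Λ y v * Λ y w - Λ y w * Λ y v)) := by
      filter_upwards [hU'] with y hy; exact hB y hy v w
    rw [(htot.congr_of_eventuallyEq hBev).fderiv]
    simp only [ContinuousLinearMap.sub_apply, ContinuousLinearMap.add_apply,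
      ContinuousLinearMap.neg_apply, ContinuousLinearMap.smul_apply,
      ContinuousLinearMap.smulRight_apply, ContinuousLinearMap.comp_apply,
      ContinuousLinearMap.flip_apply, ContinuousLinearMap.zero_apply, map_zero,
      smul_eq_mul, op_smul_eq_mul]
    noncomm_ring
  constructor
  · -- fake curvature vanishes
    intro x hx v w
    have hU' : U ∈ nhds x := hU.mem_nhds hx
    have hsymg : ∀ a b, fderiv ℝ (fderiv ℝ g) x a b = fderiv ℝ (fderiv ℝ g) x b a :=
      fun a b => (hg_sm.contDiffAt hU').isSymmSndFDerivAt (by simp [minSmoothness_of_isRCLikeNormedField]) a b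
    simp only [dOne]
    simp only [(main x hx).1]
    rw [hB x hx v w]
    simp only [map_sub, map_neg, ht_equiv]
    simp only [hA x hx]
    rw [hsymg w v]
    have hSig1 : (Λ x v * t (Λ x w) - t (Λ x w) * Λ x v)
        - (t (Λ x v) * t (Λ x w) - t (Λ x w) * t (Λ x v)) = (0 : Mat n) := by
      rw [ht_peiffer]; abel
    rw [← hSig1]
    noncomm_ring
  · -- 2-Bianchi identity
    intro x hx u v w
    have hU' : U ∈ nhds x := hU.mem_nhds hx
    have hsymg : ∀ a b, fderiv ℝ (fderiv ℝ g) x a b = fderiv ℝ (fderiv ℝ g) x b a :=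
      fun a b => (hg_sm.contDiffAt hU').isSymmSndFDerivAt (by simp [minSmoothness_of_isRCLikeNormedField]) a b
    have hsymΛ : ∀ c a b, fderiv ℝ (fderiv ℝ (fun z => Λ z c)) x a b
        = fderiv ℝ (fderiv ℝ (fun z => Λ z c)) x b a :=
      fun c a b => ((hΛ_sm c).contDiffAt hU').isSymmSndFDerivAt (by simp [minSmoothness_of_isRCLikeNormedField]) a b
    have hBc : ∀ a b, B x a b =
        -(fderiv ℝ (fun y => Λ y b) x a) + fderiv ℝ (fun y => Λ y a) x b
        - ((g' x * fderiv ℝ g x a) * Λ x b - Λ x b * (g' x * fderiv ℝ g x a))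
        + ((g' x * fderiv ℝ g x b) * Λ x a - Λ x a * (g' x * fderiv ℝ g x b))
        + (Λ x a * Λ x b - Λ x b * Λ x a) := by
      intro a b
      rw [hB x hx a b, hA x hx a, hA x hx b, ← sub_eq_zero]
      have hz : ((t (Λ x a) * Λ x b - Λ x b * t (Λ x a)) - (Λ x a * Λ x b - Λ x b * Λ x a))
          - ((t (Λ x b) * Λ x a - Λ x a * t (Λ x b)) - (Λ x b * Λ x a - Λ x a * Λ x b))
          = (0 : Mat n) := by
        rw [ht_peiffer, ht_peiffer]; abel
      rw [← hz]
      noncomm_ring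
    simp only [dTwo]
    rw [hDB x hx v w u, hDB x hx u w v, hDB x hx u v w, hBc v w, hBc u w, hBc u v]
    simp only [(main x hx).1]
    simp only [hA x hx]
    rw [hsymg v u, hsymg w u, hsymg w v, hsymΛ w v u, hsymΛ v w u, hsymΛ u w v]
    have hSig : (((t (fderiv ℝ (fun y => Λ y v) x u) * Λ x w - Λ x w * t (fderiv ℝ (fun y => Λ y v) x u))) - ((fderiv ℝ (fun y => Λ y v) x u * Λ x w - Λ x w * fderiv ℝ (fun y => Λ y v) x u)))
      - (((t (fderiv ℝ (fun y => Λ y w) x u) * Λ x v - Λ x v * t (fderiv ℝ (fun y => Λ y w) x u))) - ((fderiv ℝ (fun y => Λ y w) x u * Λ x v - Λ x v * fderiv ℝ (fun y => Λ y w) x u)))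
      + (((t (Λ x v) * (fderiv ℝ (fun y => Λ y w) x u) - (fderiv ℝ (fun y => Λ y w) x u) * t (Λ x v))) - (((Λ x v) * (fderiv ℝ (fun y => Λ y w) x u) - (fderiv ℝ (fun y => Λ y w) x u) * (Λ x v))))
      - (((t (Λ x w) * (fderiv ℝ (fun y => Λ y v) x u) - (fderiv ℝ (fun y => Λ y v) x u) * t (Λ x w))) - (((Λ x w) * (fderiv ℝ (fun y => Λ y v) x u) - (fderiv ℝ (fun y => Λ y v) x u) * (Λ x w))))
      - (((t (fderiv ℝ (fun y => Λ y u) x v) * Λ x w - Λ x w * t (fderiv ℝ (fun y => Λ y u) x v))) - ((fderiv ℝ (fun y => Λ y u) x v * Λ x w - Λ x w * fderiv ℝ (fun y => Λ y u) x v)))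
      + (((t (fderiv ℝ (fun y => Λ y w) x v) * Λ x u - Λ x u * t (fderiv ℝ (fun y => Λ y w) x v))) - ((fderiv ℝ (fun y => Λ y w) x v * Λ x u - Λ x u * fderiv ℝ (fun y => Λ y w) x v)))
      - (((t (Λ x u) * (fderiv ℝ (fun y => Λ y w) x v) - (fderiv ℝ (fun y => Λ y w) x v) * t (Λ x u))) - (((Λ x u) * (fderiv ℝ (fun y => Λ y w) x v) - (fderiv ℝ (fun y => Λ y w) x v) * (Λ x u))))
      + (((t (Λ x w) * (fderiv ℝ (fun y => Λ y u) x v) - (fderiv ℝ (fun y => Λ y u) x v) * t (Λ x w))) - (((Λ x w) * (fderiv ℝ (fun y => Λ y u) x v) - (fderiv ℝ (fun y => Λ y u) x v) * (Λ x w))))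
      + (((t (fderiv ℝ (fun y => Λ y u) x w) * Λ x v - Λ x v * t (fderiv ℝ (fun y => Λ y u) x w))) - ((fderiv ℝ (fun y => Λ y u) x w * Λ x v - Λ x v * fderiv ℝ (fun y => Λ y u) x w)))
      - (((t (fderiv ℝ (fun y => Λ y v) x w) * Λ x u - Λ x u * t (fderiv ℝ (fun y => Λ y v) x w))) - ((fderiv ℝ (fun y => Λ y v) x w * Λ x u - Λ x u * fderiv ℝ (fun y => Λ y v) x w)))
      + (((t (Λ x u) * (fderiv ℝ (fun y => Λ y v) x w) - (fderiv ℝ (fun y => Λ y v) x w) * t (Λ x u))) - (((Λ x u) * (fderiv ℝ (fun y => Λ y v) x w) - (fderiv ℝ (fun y => Λ y v) x w) * (Λ x u))))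
      - (((t (Λ x v) * (fderiv ℝ (fun y => Λ y u) x w) - (fderiv ℝ (fun y => Λ y u) x w) * t (Λ x v))) - (((Λ x v) * (fderiv ℝ (fun y => Λ y u) x w) - (fderiv ℝ (fun y => Λ y u) x w) * (Λ x v))))
      - (((t (Λ x u) * (-(fderiv ℝ (fun y => Λ y w) x v) + fderiv ℝ (fun y => Λ y v) x w - ((g' x * fderiv ℝ g x v) * Λ x w - Λ x w * (g' x * fderiv ℝ g x v)) + ((g' x * fderiv ℝ g x w) * Λ x v - Λ x v * (g' x * fderiv ℝ g x w)) + (Λ x v * Λ x w - Λ x w * Λ x v)) - (-(fderiv ℝ (fun y => Λ y w) x v) + fderiv ℝ (fun y => Λ y v) x w - ((g' x * fderiv ℝ g x v) * Λ x w - Λ x w * (g' x * fderiv ℝ g x v)) + ((g' x * fderiv ℝ g x w) * Λ x v - Λ x v * (g' x * fderiv ℝ g x w)) + (Λ x v * Λ x w - Λ x w * Λ x v)) * t (Λ x u))) - (((Λ x u) * (-(fderiv ℝ (fun y => Λ y w) x v) + fderiv ℝ (fun y => Λ y v) x w - ((g' x * fderiv ℝ g x v) * Λ x w - Λ x w * (g'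 x * fderiv ℝ g x v)) + ((g' x * fderiv ℝ g x w) * Λ x v - Λ x v * (g' x * fderiv ℝ g x w)) + (Λ x v * Λ x w - Λ x w * Λ x v)) - (-(fderiv ℝ (fun y => Λ y w) x v) + fderiv ℝ (fun y => Λ y v) x w - ((g' x * fderiv ℝ g x v) * Λ x w - Λ x w * (g' x * fderiv ℝ g x v)) + ((g' x * fderiv ℝ g x w) * Λ x v - Λ x v * (g' x * fderiv ℝ g x w)) + (Λ x v * Λ x w - Λ x w * Λ x v)) * (Λ x u))))
      + (((t (Λ x v) * (-(fderiv ℝ (fun y => Λ y w) x u) + fderiv ℝ (fun y => Λ y u) x w - ((g' x * fderiv ℝ g x u) * Λ x w - Λ x w * (g' x * fderiv ℝ g x u)) + ((g' x * fderiv ℝ g x w) * Λ x u - Λ x u * (g' x * fderiv ℝ g x w)) + (Λ x u * Λ x w - Λ x w * Λ x u)) - (-(fderiv ℝ (fun y => Λ y w) x u) + fderiv ℝ (fun y => Λ y u) x w - ((g' x * fderiv ℝ g x u) * Λ x w - Λ x w * (g' x * fderiv ℝ g x u)) + ((g' x * fderiv ℝ g x w) * Λ x u - Λ x u * (g' x *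 fderiv ℝ g x w)) + (Λ x u * Λ x w - Λ x w * Λ x u)) * t (Λ x v))) - (((Λ x v) * (-(fderiv ℝ (fun y => Λ y w) x u) + fderiv ℝ (fun y => Λ y u) x w - ((g' x * fderiv ℝ g x u) * Λ x w - Λ x w * (g' x * fderiv ℝ g x u)) + ((g' x * fderiv ℝ g x w) * Λ x u - Λ x u * (g' x * fderiv ℝ g x w)) + (Λ x u * Λ x w - Λ x w * Λ x u)) - (-(fderiv ℝ (fun y => Λ y w) x u) + fderiv ℝ (fun y => Λ y u) x w - ((g' x * fderiv ℝ g x u) * Λ x w - Λ x w * (g' x * fderiv ℝ g x u)) + ((g' x * fderiv ℝ g x w) * Λ x u - Λ x u * (g' x * fderiv ℝ g x w)) + (Λ x u * Λ x w - Λ x w * Λ x u)) * (Λ x v))))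
      - (((t (Λ x w) * (-(fderiv ℝ (fun y => Λ y v) x u) + fderiv ℝ (fun y => Λ y u) x v - ((g' x * fderiv ℝ g x u) * Λ x v - Λ x v * (g' x * fderiv ℝ g x u)) + ((g' x * fderiv ℝ g x v) * Λ x u - Λ x u * (g' x * fderiv ℝ g x v)) + (Λ x u * Λ x v - Λ x v * Λ x u)) - (-(fderiv ℝ (fun y => Λ y v) x u) + fderiv ℝ (fun y => Λ y u) x v - ((g' x * fderiv ℝ g x u) * Λ x v - Λ x v * (g' x * fderiv ℝ g x u)) + ((g' x * fderiv ℝ g x v) * Λ x u - Λ x u * (g' x * fderiv ℝ g x v)) + (Λ x u * Λ x v - Λ x v * Λ x u)) * t (Λ x w))) - (((Λ x w) * (-(fderiv ℝ (fun y => Λ y v) x u) + fderiv ℝ (fun y => Λ y u) x v - ((g' x * fderiv ℝ g x u) * Λ x v - Λ x v * (g' x * fderiv ℝ g x u)) + ((g' x * fderiv ℝ g x v) * Λ x u - Λ x u * (g' x * fderiv ℝ g x v)) + (Λ x u * Λ x v - Λ x v * Λ x u)) - (-(fderiv ℝ (fun y => Λ y v) x u) + fderiv ℝ (fun y => Λ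 y u) x v - ((g' x * fderiv ℝ g x u) * Λ x v - Λ x v * (g' x * fderiv ℝ g x u)) + ((g' x * fderiv ℝ g x v) * Λ x u - Λ x u * (g' x * fderiv ℝ g x v)) + (Λ x u * Λ x v - Λ x v * Λ x u)) * (Λ x w))))

        = (0 : Mat n) := by
      simp only [ht_peiffer]; abel
    rw [← hSig]
    noncomm_ring

end
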